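/- Let b ≥ 2, h ≥ 1 and a be integers with 0 ≤ a < b^h, let r be an integer with 0 ≤ r < h, let J be a finite set of n non-negative integers all congruent to r modulo h, and let ε > 0. Then μ({x ∈ (0,1) : |Σ_{j ∈ J} (1_{[a·b^{−h}, (a+1)·b^{−h})}({b^j x}) − b^{−h})| > ε·√n}) ≤ 2·exp(−ε² / (2·b^{−h}(1 − b^{−h}) + (2/3)·ε·n^{−1/2})). -/

import Mathlib

open MeasureTheory Real Set

noncomputable def bfn (b h a j : ℕ) (x : ℝ) : ℝ :=
  (Set.Ico ((a : ℝ) / (b : ℝ) ^ h) (((a : ℝ) + 1) / (b : ℝ) ^ h)).indicator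
    (fun _ => (1 : ℝ)) (Int.fract ((b : ℝ) ^ j * x))

lemma bfn_meas (b h a j : ℕ) : Measurable (bfn b h a j) := by
  unfold bfn
  exact (measurable_const.indicator measurableSet_Ico).comp
    (measurable_fract.comp (measurable_const.mul measurable_id))

lemma bfn_nonneg (b h a j : ℕ) (x : ℝ) : 0 ≤ bfn b h a j x := by
  unfold bfn; exact Set.indicator_nonneg (fun _ _ => zero_le_one) _

lemma bfn_le_one (b h a j : ℕ) (x : ℝ) : bfn b h a j x ≤ 1 := by
  unfold bfn
  exact Set.indicator_le' (fun _ _ => le_rfl) (fun _ _ => zero_le_one) _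

lemma sum_bfn_meas (b h a : ℕ) (J : Finset ℕ) :
    Measurable (fun x => ∑ j ∈ J, bfn b h a j x) :=
  Finset.measurable_sum _ (fun j _ => bfn_meas b h a j)

lemma exp_sum_integrable (b h a : ℕ) (t : ℝ) (J : Finset ℕ) (μ : Measure ℝ)
    [IsFiniteMeasure μ] :
    Integrable (fun x => Real.exp (t * ∑ j ∈ J, bfn b h a j x)) μ := by
  refine (integrable_const (Real.exp (|t| * J.card))).mono'
    ((measurable_const.mul (sum_bfn_meas b h a J)).exp.aestronglyMeasurable) ?_
  refine Filter.Eventually.of_forall fun x => ?_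
  rw [Real.norm_eq_abs, abs_of_pos (Real.exp_pos _)]
  apply Real.exp_le_exp.mpr
  calc t * ∑ j ∈ J, bfn b h a j x ≤ |t * ∑ j ∈ J, bfn b h a j x| := le_abs_self _
    _ = |t| * |∑ j ∈ J, bfn b h a j x| := abs_mul _ _
    _ ≤ |t| * J.card := by
        gcongr
        rw [abs_of_nonneg (Finset.sum_nonneg fun j _ => bfn_nonneg b h a j x)]
        calc ∑ j ∈ J, bfn b h a j x ≤ ∑ j ∈ J, (1:ℝ) :=
              Finset.sum_le_sum fun j _ => bfn_le_one b h a j x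
          _ = J.card := by simp

-- shift lemma
lemma bfn_shift (b h a j c : ℕ) (hcj : c ≤ j) (x : ℝ) :
    bfn b h a j x = bfn b h a (j - c) (Int.fract ((b : ℝ) ^ c * x)) := by
  unfold bfn
  congr 1
  have h1 : (b : ℝ) ^ j * x = (b : ℝ) ^ (j - c) * ((b : ℝ) ^ c * x) := by
    rw [← mul_assoc, ← pow_add]
    congr 2
    omega
  rw [h1]
  conv_lhs => rw [show (b:ℝ)^c * x = Int.fract ((b:ℝ)^c * x) + ⌊(b:ℝ)^c * x⌋ by
    rw [Int.fract]; ring]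
  rw [mul_add]
  have h2 : (b:ℝ)^(j-c) * (⌊(b:ℝ)^c*x⌋ : ℝ) = (((b^(j-c) : ℕ) : ℤ) * ⌊(b:ℝ)^c*x⌋ : ℤ) := by
    push_cast; ring
  rw [h2, Int.fract_add_intCast]

-- floor/fract on subinterval
lemma fract_on_interval (B : ℝ) (k : ℕ) (x : ℝ) (h1 : (k : ℝ) < B * x) (h2 : B * x < k + 1) :
    Int.fract (B * x) = B * x - k := by
  have : ⌊B * x⌋ = (k : ℤ) := by
    rw [Int.floor_eq_iff]
    constructor
    · push_cast; linarith
    · push_cast; linarith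
  rw [Int.fract, this]; push_cast; ring

-- value of bfn m on a subinterval
lemma bfn_on_interval (b h a m : ℕ) (hb : 2 ≤ b) (ha : a < b ^ h) (k : ℕ) (x : ℝ)
    (h1 : (k : ℝ) < (b : ℝ) ^ (m + h) * x) (h2 : (b : ℝ) ^ (m + h) * x < k + 1) :
    bfn b h a m x = if k % b ^ h = a then 1 else 0 := by
  have hbR : (0:ℝ) < (b:ℝ) := by positivity
  have hc : (0:ℝ) < (b:ℝ) ^ h := by positivity
  set s := k % b ^ h with hs
  set q := k / b ^ h with hq
  have hk : k = q * b ^ h + s := by rw [hq, hs, Nat.mul_comm]; exact (Nat.div_add_mod k (b^h)).symm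
  have hsb : s < b ^ h := Nat.mod_lt _ (by positivity)
  -- b^m x = (B x)/b^h
  have hBm : (b:ℝ) ^ m * x = ((b:ℝ)^(m+h) * x) / (b:ℝ)^h := by
    rw [pow_add]; field_simp
  have hlow : (q : ℝ) + (s : ℝ)/(b:ℝ)^h < (b:ℝ)^m * x := by
    rw [hBm]
    rw [lt_div_iff₀ hc]
    calc ((q:ℝ) + (s:ℝ)/(b:ℝ)^h) * (b:ℝ)^h = (q:ℝ)*(b:ℝ)^h + s := by field_simp
      _ = (k:ℝ) := by rw [hk]; push_cast; ring
      _ < _ := h1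
  have hhigh : (b:ℝ)^m * x < (q : ℝ) + ((s : ℝ)+1)/(b:ℝ)^h := by
    rw [hBm, div_lt_iff₀ hc]
    calc (b:ℝ)^(m+h) * x < k + 1 := h2
      _ = ((q:ℝ) + ((s:ℝ)+1)/(b:ℝ)^h) * (b:ℝ)^h := by rw [hk]; push_cast; field_simp; ring
  -- fract (b^m x) = b^m x - q
  have hsb' : ((s:ℝ)+1) ≤ (b:ℝ)^h := by
    have : (s:ℝ) + 1 ≤ ((b^h : ℕ) : ℝ) := by exact_mod_cast Nat.succ_le_of_lt hsb
    simpa [Nat.cast_pow] using this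
  have hfr : Int.fract ((b:ℝ)^m * x) = (b:ℝ)^m * x - q := by
    have h01 : (b:ℝ)^m * x - q ∈ Set.Ico (0:ℝ) 1 := by
      constructor
      · have : (0:ℝ) ≤ (s:ℝ)/(b:ℝ)^h := by positivity
        linarith
      · have : ((s:ℝ)+1)/(b:ℝ)^h ≤ 1 := by
          rw [div_le_one hc]; exact hsb'
        linarith
    have : Int.fract ((b:ℝ)^m * x) = Int.fract ((b:ℝ)^m * x - (q:ℤ)) := by
      rw [Int.fract_sub_intCast]
    rw [this]
    rw [Int.fract_eq_self.mpr]
    · push_cast; ring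
    · constructor
      · have := h01.1; push_cast; linarith
      · have := h01.2; push_cast; linarith
  have hfr_low : (s:ℝ)/(b:ℝ)^h < Int.fract ((b:ℝ)^m * x) := by rw [hfr]; linarith
  have hfr_high : Int.fract ((b:ℝ)^m * x) < ((s:ℝ)+1)/(b:ℝ)^h := by rw [hfr]; linarith
  unfold bfn
  by_cases hsa : s = a
  · rw [if_pos hsa]
    rw [Set.indicator_of_mem]
    constructor
    · subst hsa; exact le_of_lt hfr_low
    · subst hsa; exact hfr_high
  · rw [if_neg hsa]
    rw [Set.indicator_of_notMem]
    intro hmem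
    obtain ⟨hm1, hm2⟩ := hmem
    rcases Nat.lt_or_ge s a with hlt | hge
    · -- s < a : fract < (s+1)/b^h ≤ a/b^h
      have : ((s:ℝ)+1) ≤ (a:ℝ) := by exact_mod_cast Nat.succ_le_of_lt hlt
      have : ((s:ℝ)+1)/(b:ℝ)^h ≤ (a:ℝ)/(b:ℝ)^h := by gcongr
      linarith
    · have hgt : a < s := lt_of_le_of_ne hge (Ne.symm hsa)
      have : ((a:ℝ)+1) ≤ (s:ℝ) := by exact_mod_cast Nat.succ_le_of_lt hgt
      have : ((a:ℝ)+1)/(b:ℝ)^h ≤ (s:ℝ)/(b:ℝ)^h := by gcongr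
      linarith

lemma count_mod (N d a : ℕ) (hd : 0 < d) (ha : a < d) :
    ((Finset.range (N * d)).filter (fun k => k % d = a)).card = N := by
  have himg : (Finset.range (N * d)).filter (fun k => k % d = a) =
      (Finset.range N).image (fun q => q * d + a) := by
    ext k
    simp only [Finset.mem_filter, Finset.mem_range, Finset.mem_image]
    constructor
    · rintro ⟨hk, hm⟩
      refine ⟨k / d, Nat.div_lt_iff_lt_mul hd |>.mpr hk, ?_⟩
      have h2 := Nat.div_add_mod' k d
      omega
    · rintro ⟨q, hq, rfl⟩
      constructor
      · have : q + 1 ≤ N := hq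
        calc q * d + a < q * d + d := by omega
          _ = (q+1) * d := by ring
          _ ≤ N * d := Nat.mul_le_mul_right d this
      · rw [Nat.add_comm, Nat.add_mul_mod_self_right, Nat.mod_eq_of_lt ha]
  rw [himg, Finset.card_image_of_injective _ (fun x y hxy => by
    have hxy' : x * d = y * d := by omega
    exact Nat.eq_of_mul_eq_mul_right hd hxy'), Finset.card_range]

lemma exp_sum_intervalIntegrable (b h a : ℕ) (t : ℝ) (J : Finset ℕ) (u v : ℝ) :
    IntervalIntegrable (fun x => Real.exp (t * ∑ j ∈ J, bfn b h a j x))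
      MeasureTheory.volume u v := by
  rw [intervalIntegrable_iff]
  haveI : IsFiniteMeasure (volume.restrict (Set.uIoc u v)) := by
    constructor
    rw [Measure.restrict_apply_univ, Set.uIoc]
    exact lt_of_le_of_lt (le_of_eq (Real.volume_Ioc)) ENNReal.ofReal_lt_top
  exact exp_sum_integrable b h a t J _

lemma mgf_formula (b h a : ℕ) (hb : 2 ≤ b) (ha : a < b ^ h) (t : ℝ) :
    ∀ n : ℕ, ∀ J : Finset ℕ, J.card = n → (∀ i ∈ J, ∀ j ∈ J, i < j → i + h ≤ j) →
      ∫ x in (0:ℝ)..1, Real.exp (t * ∑ j ∈ J, bfn b h a j x) =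
        (((b:ℝ)^h)⁻¹ * Real.exp t + (1 - ((b:ℝ)^h)⁻¹)) ^ n := by
  intro n
  induction n with
  | zero =>
    intro J hJ0 _
    rw [Finset.card_eq_zero.mp hJ0]
    simp
  | succ n IH =>
    intro J hJcard hsep
    have hne : J.Nonempty := by rw [← Finset.card_pos, hJcard]; omega
    set m := J.min' hne with hm
    have hmJ : m ∈ J := J.min'_mem hne
    set J' := J.erase m with hJ'
    have hJ'card : J'.card = n := by rw [hJ', Finset.card_erase_of_mem hmJ, hJcard]; omega
    have hJ'sep : ∀ j ∈ J', m + h ≤ j := by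
      intro j hj
      have hjJ : j ∈ J := Finset.mem_of_mem_erase hj
      have hne' : j ≠ m := Finset.ne_of_mem_erase hj
      exact hsep m hmJ j hjJ (lt_of_le_of_ne (J.min'_le j hjJ) (Ne.symm hne'))
    set J'' := J'.image (fun j => j - (m + h)) with hJ''
    have hinj : ∀ x ∈ J', ∀ y ∈ J', x - (m+h) = y - (m+h) → x = y := by
      intro x hx y hy hxy
      have hx' := hJ'sep x hx; have hy' := hJ'sep y hy
      omega
    have hJ''card : J''.card = n := by
      rw [hJ'', Finset.card_image_of_injOn hinj, hJ'card]
    have hJ''sep : ∀ i ∈ J'', ∀ j ∈ J'', i < j → i + h ≤ j := by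
      intro i hi j hj hij
      rw [hJ'', Finset.mem_image] at hi hj
      obtain ⟨i0, hi0, rfl⟩ := hi
      obtain ⟨j0, hj0, rfl⟩ := hj
      have hi0' := hJ'sep i0 hi0; have hj0' := hJ'sep j0 hj0
      have h1 : i0 < j0 := by omega
      have := hsep i0 (Finset.mem_of_mem_erase hi0) j0 (Finset.mem_of_mem_erase hj0) h1
      omega
    have IH' := IH J'' hJ''card hJ''sep
    set Bn := b ^ (m + h) with hBn
    have hb0 : 0 < b := by omega
    have hBnpos : 0 < Bn := by positivity
    set B : ℝ := (b:ℝ) ^ (m + h) with hB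
    have hBpos : (0:ℝ) < B := by positivity
    have hBcast : ((Bn : ℕ) : ℝ) = B := by rw [hBn, hB]; push_cast; ring
    -- per-interval computation
    have key : ∀ k : ℕ, k < Bn →
        ∫ x in ((k:ℝ)/B)..(((k:ℝ)+1)/B), Real.exp (t * ∑ j ∈ J, bfn b h a j x) =
          (if k % b ^ h = a then Real.exp t else 1) * (B⁻¹ *
            ∫ y in (0:ℝ)..1, Real.exp (t * ∑ j ∈ J'', bfn b h a j y)) := by
      intro k hk
      have hcong : ∫ x in ((k:ℝ)/B)..(((k:ℝ)+1)/B), Real.exp (t * ∑ j ∈ J, bfn b h a j x)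
          = ∫ x in ((k:ℝ)/B)..(((k:ℝ)+1)/B),
              (if k % b ^ h = a then Real.exp t else 1) *
                Real.exp (t * ∑ j ∈ J'', bfn b h a j (B * x - k)) := by
        apply intervalIntegral.integral_congr_ae
        have hne1 : ∀ᵐ x : ℝ, x ≠ ((k:ℝ)+1)/B := by
          rw [MeasureTheory.ae_iff]
          have hset : {x : ℝ | ¬ x ≠ ((k:ℝ)+1)/B} = {((k:ℝ)+1)/B} := by ext y; simp
          rw [hset]
          exact Real.volume_singleton
        filter_upwards [hne1] with x hxne hxmem
        have hle : (k:ℝ)/B ≤ ((k:ℝ)+1)/B := by gcongr; linarith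
        rw [Set.uIoc_of_le hle] at hxmem
        have hx1 : (k:ℝ)/B < x := hxmem.1
        have hx2 : x < ((k:ℝ)+1)/B := lt_of_le_of_ne hxmem.2 hxne
        have hx1' : (k:ℝ) < B * x := by
          rw [div_lt_iff₀ hBpos] at hx1; linarith
        have hx2' : B * x < (k:ℝ) + 1 := by
          rw [lt_div_iff₀ hBpos] at hx2; linarith
        have hfr : Int.fract (B * x) = B * x - k := fract_on_interval B k x hx1' hx2'
        -- split the sum
        have hsum : ∑ j ∈ J, bfn b h a j x = bfn b h a m x + ∑ j ∈ J', bfn b h a j x := by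
          rw [hJ']
          exact (Finset.add_sum_erase J _ hmJ).symm
        have hval : bfn b h a m x = if k % b ^ h = a then 1 else 0 :=
          bfn_on_interval b h a m hb ha k x hx1' hx2'
        have hshift : ∑ j ∈ J', bfn b h a j x = ∑ j ∈ J'', bfn b h a j (B * x - k) := by
          rw [hJ'', Finset.sum_image hinj]
          apply Finset.sum_congr rfl
          intro j hj
          rw [bfn_shift b h a j (m+h) (hJ'sep j hj) x, ← hB, hfr]
        rw [hsum, hval, hshift, mul_add, Real.exp_add]
        by_cases hka : k % b ^ h = a
        · rw [if_pos hka, if_pos hka, mul_one]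
        · rw [if_neg hka, if_neg hka, mul_zero, Real.exp_zero, one_mul]
      rw [hcong, intervalIntegral.integral_const_mul]
      congr 1
      have hcomp := intervalIntegral.integral_comp_mul_sub
        (fun y => Real.exp (t * ∑ j ∈ J'', bfn b h a j y)) (ne_of_gt hBpos) (k:ℝ)
        (a := (k:ℝ)/B) (b := ((k:ℝ)+1)/B)
      rw [hcomp]
      have hb1 : B * ((k:ℝ)/B) - k = 0 := by field_simp; ring
      have hb2 : B * (((k:ℝ)+1)/B) - k = 1 := by field_simp; ring
      rw [hb1, hb2, smul_eq_mul]
    -- split the whole integral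
    have hadj := intervalIntegral.sum_integral_adjacent_intervals
      (a := fun k : ℕ => (k:ℝ)/B) (n := Bn)
      (f := fun x => Real.exp (t * ∑ j ∈ J, bfn b h a j x)) (μ := volume)
      (fun k _ => exp_sum_intervalIntegrable b h a t J _ _)
    have ha0 : ((0:ℕ):ℝ)/B = 0 := by simp
    have haB : ((Bn:ℕ):ℝ)/B = 1 := by rw [hBcast]; field_simp
    rw [ha0, haB] at hadj
    rw [← hadj]
    have hterm : ∀ k ∈ Finset.range Bn,
        ∫ x in ((k:ℝ)/B)..(((k+1:ℕ):ℝ)/B), Real.exp (t * ∑ j ∈ J, bfn b h a j x) =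
          (if k % b ^ h = a then Real.exp t else 1) * (B⁻¹ *
            ∫ y in (0:ℝ)..1, Real.exp (t * ∑ j ∈ J'', bfn b h a j y)) := by
      intro k hk
      have hc : ((k+1:ℕ):ℝ)/B = ((k:ℝ)+1)/B := by push_cast; ring
      rw [hc]
      exact key k (Finset.mem_range.mp hk)
    rw [Finset.sum_congr rfl hterm, ← Finset.sum_mul, IH']
    -- evaluate the sum of the if's
    have hcount : ((Finset.range Bn).filter (fun k => k % b ^ h = a)).card = b ^ m := by
      have : Bn = b ^ m * b ^ h := by rw [hBn, pow_add]
      rw [this]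
      exact count_mod (b^m) (b^h) a (by positivity) ha
    have hsum_if : ∑ k ∈ Finset.range Bn, (if k % b ^ h = a then Real.exp t else 1) =
        (b^m : ℝ) * Real.exp t + ((Bn : ℝ) - (b^m : ℝ)) := by
      rw [Finset.sum_ite, Finset.sum_const, Finset.sum_const, hcount]
      have hcard2 : ((Finset.range Bn).filter (fun k => ¬ k % b ^ h = a)).card = Bn - b ^ m := by
        have := Finset.card_filter_add_card_filter_not
          (s := Finset.range Bn) (p := fun k => k % b ^ h = a)
        rw [Finset.card_range] at this
        omega
      rw [hcard2, nsmul_eq_mul, nsmul_eq_mul]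
      have hle : b ^ m ≤ Bn := by
        rw [hBn]; exact Nat.pow_le_pow_right hb0 (by omega)
      push_cast [Nat.cast_sub hle]
      ring
    rw [hsum_if]
    have hfrac1 : ((b:ℝ)^m) * B⁻¹ = ((b:ℝ)^h)⁻¹ := by
      rw [hB, pow_add]
      field_simp
    have e1 : ((b^m : ℝ) * Real.exp t + ((Bn : ℝ) - (b^m : ℝ))) * (B⁻¹ *
          (((b:ℝ)^h)⁻¹ * Real.exp t + (1 - ((b:ℝ)^h)⁻¹)) ^ n) =
        ((((b:ℝ)^m) * B⁻¹) * Real.exp t + ((Bn : ℝ) * B⁻¹ - ((b:ℝ)^m) * B⁻¹)) *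
          ((((b:ℝ)^h)⁻¹ * Real.exp t + (1 - ((b:ℝ)^h)⁻¹)) ^ n) := by
      push_cast
      ring
    rw [e1, hfrac1, hBcast, mul_inv_cancel₀ (ne_of_gt hBpos)]
    rw [pow_succ]
    ring

section ExpTaylor
open Nat

lemma exp_real_tsum (t : ℝ) : Real.exp t = ∑' n : ℕ, t ^ n / n ! := by
  rw [Real.exp_eq_exp_ℝ, NormedSpace.exp_eq_tsum_div]

lemma fact_ge (n : ℕ) : 2 * 3 ^ n ≤ (n + 2)! := by
  induction n with
  | zero => norm_num
  | succ n IH =>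
    have : (n + 3)! = (n + 3) * (n + 2)! := rfl
    calc 2 * 3 ^ (n+1) = 3 * (2 * 3 ^ n) := by ring
      _ ≤ 3 * (n + 2)! := by omega
      _ ≤ (n+3) * (n + 2)! := by
          apply Nat.mul_le_mul_right
          omega
      _ = (n + 3)! := rfl

lemma exp_taylor_bound (t : ℝ) (ht0 : 0 ≤ t) (ht3 : t < 3) :
    Real.exp t - 1 - t ≤ t ^ 2 / (2 * (1 - t / 3)) := by
  have hsum : Summable (fun n : ℕ => t ^ n / n !) := Real.summable_pow_div_factorial t
  have hsum1 : Summable (fun n : ℕ => t ^ (n+1) / (n + 1)!) := by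
    have := (summable_nat_add_iff 1).mpr hsum
    exact this
  have hsum2 : Summable (fun n : ℕ => t ^ (n+2) / (n + 2)!) := by
    have := (summable_nat_add_iff 2).mpr hsum
    exact this
  have hsplit : Real.exp t = 1 + t + ∑' n : ℕ, t ^ (n+2) / (n + 2)! := by
    rw [exp_real_tsum, Summable.tsum_eq_zero_add hsum]
    rw [Summable.tsum_eq_zero_add hsum1]
    norm_num [Nat.factorial]
    ring
  have hgeom : Summable (fun n : ℕ => t ^ 2 / 2 * (t / 3) ^ n) := by
    apply Summable.mul_left
    apply summable_geometric_of_lt_one (by positivity) (by linarith)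
  have hterm : ∀ n : ℕ, t ^ (n+2) / (n + 2)! ≤ t ^ 2 / 2 * (t / 3) ^ n := by
    intro n
    have h1 : t ^ (n+2) / (n + 2)! = t ^ 2 * t ^ n / (n + 2)! := by ring
    rw [h1, div_le_iff₀ (by positivity : (0:ℝ) < ((n + 2)! : ℕ))]
    have h2 : t ^ 2 / 2 * (t / 3) ^ n * ((n + 2)! : ℕ) =
        t ^ 2 * t ^ n * (((n + 2)! : ℕ) / (2 * 3 ^ n)) := by
      rw [div_pow]
      field_simp
    rw [h2]
    have h3 : (1:ℝ) ≤ ((n + 2)! : ℕ) / (2 * 3 ^ n) := by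
      rw [le_div_iff₀ (by positivity)]
      have := fact_ge n
      calc (1:ℝ) * (2 * 3 ^ n) = ((2 * 3 ^ n : ℕ) : ℝ) := by push_cast; ring
        _ ≤ (((n + 2)! : ℕ) : ℝ) := by exact_mod_cast this
    nlinarith [pow_nonneg ht0 n, sq_nonneg t, mul_nonneg (sq_nonneg t) (pow_nonneg ht0 n)]
  have hge : ∑' n : ℕ, t ^ (n+2) / (n + 2)! ≤ ∑' n : ℕ, t ^ 2 / 2 * (t / 3) ^ n :=
    Summable.tsum_le_tsum hterm hsum2 hgeom
  have hgeomval : ∑' n : ℕ, t ^ 2 / 2 * (t / 3) ^ n = t ^ 2 / 2 * (1 - t/3)⁻¹ := by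
    rw [tsum_mul_left, tsum_geometric_of_lt_one (by positivity) (by linarith)]
  have : Real.exp t - 1 - t = ∑' n : ℕ, t ^ (n+2) / (n + 2)! := by rw [hsplit]; ring
  rw [this]
  calc ∑' n : ℕ, t ^ (n+2) / (n + 2)! ≤ t ^ 2 / 2 * (1 - t/3)⁻¹ := by rw [← hgeomval]; exact hge
    _ = t ^ 2 / (2 * (1 - t/3)) := by
        have h13 : (0:ℝ) < 1 - t/3 := by linarith
        field_simp
end ExpTaylor

lemma bernoulli_mgf (p t : ℝ) (hp0 : 0 ≤ p) (hp1 : p ≤ 1) (ht : 0 ≤ t) :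
    (1 - p) * Real.exp (-(p * t)) + p * Real.exp ((1 - p) * t) ≤
      Real.exp (p * (1 - p) * (Real.exp t - 1 - t)) := by
  set q := 1 - p with hq
  have hq0 : 0 ≤ q := by linarith
  set D : ℝ → ℝ := fun s => q * Real.exp (-(p * s)) + p * Real.exp (q * s) with hDdef
  have hD : ∀ s, 0 < D s := by
    intro s
    by_cases hp : p = 0
    · have hds : D s = Real.exp (-(p * s)) := by simp [hDdef, hp, hq]
      rw [hds]; exact Real.exp_pos _
    · have hp' : 0 < p := lt_of_le_of_ne hp0 (Ne.symm hp)
      have h1 : 0 ≤ q * Real.exp (-(p * s)) := by positivity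
      have h2 : 0 < p * Real.exp (q * s) := by positivity
      simp only [hDdef]; linarith
  set F : ℝ → ℝ := fun s => p * q * (Real.exp s - 1 - s) - Real.log (D s) with hFdef
  have hDeriv : ∀ s, HasDerivAt F
      (p * q * (Real.exp s - 1) -
        (p * q * (Real.exp (q * s) - Real.exp (-(p * s)))) / D s) s := by
    intro s
    have h1 : HasDerivAt (fun s : ℝ => -(p * s)) (-p) s := by
      exact (((hasDerivAt_id s).const_mul p).neg).congr_deriv (by simp)
    have h2 : HasDerivAt (fun s : ℝ => q * s) q s := by
      simpa using (hasDerivAt_id s).const_mul q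
    have hexp1 := h1.exp
    have hexp2 := h2.exp
    have hDd : HasDerivAt D (p * q * (Real.exp (q * s) - Real.exp (-(p * s)))) s := by
      have := (hexp1.const_mul q).add (hexp2.const_mul p)
      exact this.congr_deriv (by ring)
    have hlog := hDd.log (ne_of_gt (hD s))
    have hpoly : HasDerivAt (fun s : ℝ => p * q * (Real.exp s - 1 - s))
        (p * q * (Real.exp s - 1)) s := by
      have h3 : HasDerivAt (fun s : ℝ => Real.exp s - 1 - s) (Real.exp s - 1) s := by
        exact ((Real.hasDerivAt_exp s).sub_const 1).sub (hasDerivAt_id s)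
      simpa using h3.const_mul (p * q)
    exact hpoly.sub hlog
  have hMono : Monotone F := by
    apply monotone_of_deriv_nonneg
    · intro s
      exact (hDeriv s).differentiableAt
    · intro s
      rw [(hDeriv s).deriv]
      set A := Real.exp (-(p * s)) with hA
      set C := Real.exp (q * s) with hC
      set E := Real.exp s with hE
      have hEA : E * A = C := by
        rw [hE, hA, hC, ← Real.exp_add]
        congr 1
        rw [hq]; ring
      have hApos : 0 < A := Real.exp_pos _
      have hCpos : 0 < C := Real.exp_pos _
      have hEpos : 0 < E := Real.exp_pos _
      have hAMGM : 0 ≤ A + E * C - 2 * C := by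
        have h1 : Real.sqrt A ^ 2 = A := Real.sq_sqrt hApos.le
        have h2 : Real.sqrt (E * C) ^ 2 = E * C := Real.sq_sqrt (by positivity)
        have h3 : Real.sqrt A * Real.sqrt (E * C) = C := by
          rw [← Real.sqrt_mul hApos.le]
          have h4 : A * (E * C) = C ^ 2 := by linear_combination C * hEA
          rw [h4, Real.sqrt_sq hCpos.le]
        nlinarith [sq_nonneg (Real.sqrt A - Real.sqrt (E * C))]
      have hkey : (E - 1) * D s - (C - A) = p * (A + E * C - 2 * C) := by
        simp only [hDdef, ← hA, ← hC, hq]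
        linear_combination (1 - p) * hEA
      rw [sub_nonneg, div_le_iff₀ (hD s)]
      have : p * q * (C - A) ≤ p * q * ((E - 1) * D s) := by
        have h5 : C - A ≤ (E - 1) * D s := by nlinarith [mul_nonneg hp0 hAMGM]
        have h6 : 0 ≤ p * q := mul_nonneg hp0 hq0
        nlinarith
      calc p * q * (C - A) ≤ p * q * ((E - 1) * D s) := this
        _ = p * q * (E - 1) * D s := by ring
  have hF0 : F 0 = 0 := by
    have hD0 : D 0 = 1 := by
      simp only [hDdef]
      norm_num
      rw [hq]; ring
    simp only [hFdef, hD0]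
    norm_num
  have hFt : 0 ≤ F t := hF0 ▸ hMono ht
  have hlogle : Real.log (D t) ≤ p * q * (Real.exp t - 1 - t) := by
    simp only [hFdef] at hFt
    linarith
  have := (Real.log_le_iff_le_exp (hD t)).mp hlogle
  simpa only [hDdef, hq] using this

lemma bernoulli_mgf' (p t : ℝ) (hp0 : 0 ≤ p) (hp1 : p ≤ 1) (ht : 0 ≤ t) :
    p * Real.exp (-((1 - p) * t)) + (1 - p) * Real.exp (p * t) ≤
      Real.exp (p * (1 - p) * (Real.exp t - 1 - t)) := by
  have h := bernoulli_mgf (1 - p) t (by linarith) (by linarith) ht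
  have h1 : (1:ℝ) - (1 - p) = p := by ring
  rw [h1] at h
  have h2 : (1 - p) * p = p * (1 - p) := by ring
  rw [h2] at h
  exact h

set_option maxHeartbeats 2000000 in
theorem stmt9 (b h a r : ℕ) (hb : 2 ≤ b) (hh : 1 ≤ h) (ha : a < b ^ h) (hr : r < h)
    (J : Finset ℕ) (n : ℕ) (hcard : J.card = n) (hn : 0 < n)
    (hJ : ∀ j ∈ J, j % h = r) (ε : ℝ) (hε : 0 < ε) :
    MeasureTheory.volume {x ∈ Set.Ioo (0 : ℝ) 1 |
        ε * Real.sqrt n <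
          |∑ j ∈ J, ((Set.Ico ((a : ℝ) / (b : ℝ) ^ h) (((a : ℝ) + 1) / (b : ℝ) ^ h)).indicator
              (fun _ => (1 : ℝ)) (Int.fract ((b : ℝ) ^ j * x)) - ((b : ℝ) ^ h)⁻¹)|} ≤
      ENNReal.ofReal (2 * Real.exp (-ε ^ 2 /
        (2 * ((b : ℝ) ^ h)⁻¹ * (1 - ((b : ℝ) ^ h)⁻¹) + 2 / 3 * ε / Real.sqrt n))) := by
  classical
  have hb0 : 0 < b := by omega
  have hbh1 : (1:ℝ) < (b:ℝ)^h := by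
    have h2b : (2:ℝ) ≤ (b:ℝ) := by exact_mod_cast hb
    calc (1:ℝ) < 2 := one_lt_two
      _ ≤ (b:ℝ) := h2b
      _ = (b:ℝ)^1 := (pow_one _).symm
      _ ≤ (b:ℝ)^h := pow_le_pow_right₀ (by linarith) hh
  set p : ℝ := ((b:ℝ)^h)⁻¹ with hp
  have hp0 : 0 < p := by rw [hp]; positivity
  have hp1 : p < 1 := by rw [hp]; exact inv_lt_one_of_one_lt₀ hbh1
  set sn : ℝ := Real.sqrt n with hsn
  have hn0 : (0:ℝ) < n := by exact_mod_cast hn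
  have hsn0 : 0 < sn := Real.sqrt_pos.mpr hn0
  have hsq : sn ^ 2 = (n:ℝ) := Real.sq_sqrt hn0.le
  set lam : ℝ := ε * sn with hlamdef
  have hlam : 0 < lam := mul_pos hε hsn0
  set v : ℝ := n * (p * (1 - p)) with hv
  have hv0 : 0 < v := by rw [hv]; have : 0 < 1 - p := by linarith
                         positivity
  set w : ℝ := v + lam / 3 with hw
  have hw0 : 0 < w := by rw [hw]; positivity
  set t0 : ℝ := lam / w with ht0def
  have ht00 : 0 < t0 := by rw [ht0def]; positivity
  have ht03 : t0 < 3 := by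
    rw [ht0def, div_lt_iff₀ hw0, hw]
    nlinarith
  have h13pos : 0 < 1 - t0 / 3 := by linarith
  set μ : Measure ℝ := volume.restrict (Set.Ioo 0 1) with hμ
  haveI : IsProbabilityMeasure μ := by
    constructor
    rw [hμ, Measure.restrict_apply_univ, Real.volume_Ioo]
    norm_num
  have hsep : ∀ i ∈ J, ∀ j ∈ J, i < j → i + h ≤ j := by
    intro i hi j hj hij
    have h1 := hJ i hi
    have h2 := hJ j hj
    have hmod : i ≡ j [MOD h] := by
      unfold Nat.ModEq
      omega
    have hdvd : h ∣ j - i := (Nat.modEq_iff_dvd' hij.le).mp hmod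
    have := Nat.le_of_dvd (by omega) hdvd
    omega
  set S : ℝ → ℝ := fun x => ∑ j ∈ J, bfn b h a j x with hS
  set X : ℝ → ℝ := fun x => S x - n * p with hX
  -- mgf
  have hmgf : ∀ t : ℝ, ProbabilityTheory.mgf X μ t =
      Real.exp (-(t * ((n:ℝ) * p))) * (p * Real.exp t + (1 - p)) ^ n := by
    intro t
    rw [ProbabilityTheory.mgf]
    have h1 : (fun x => Real.exp (t * X x)) =
        (fun x => Real.exp (-(t * ((n:ℝ) * p))) * Real.exp (t * S x)) := by
      funext x
      rw [← Real.exp_add]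
      congr 1
      simp only [hX]
      ring
    rw [h1, MeasureTheory.integral_const_mul]
    congr 1
    have h2 : ∫ x, Real.exp (t * S x) ∂μ = ∫ x in (0:ℝ)..1, Real.exp (t * S x) := by
      rw [hμ, intervalIntegral.integral_of_le (by norm_num : (0:ℝ) ≤ 1)]
      exact (MeasureTheory.integral_Ioc_eq_integral_Ioo).symm
    rw [h2]
    simp only [hS]
    rw [mgf_formula b h a hb ha t n J hcard hsep]
  have hint : ∀ t : ℝ, MeasureTheory.Integrable (fun x => Real.exp (t * X x)) μ := by
    intro t
    have h1 : (fun x => Real.exp (t * X x)) =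
        (fun x => Real.exp (-(t * ((n:ℝ) * p))) * Real.exp (t * S x)) := by
      funext x
      rw [← Real.exp_add]; congr 1; simp only [hX]; ring
    rw [h1]
    exact (exp_sum_integrable b h a t J μ).const_mul _
  have hexp_taylor := exp_taylor_bound t0 ht00.le ht03
  have harith : -t0 * lam + v * (t0 ^ 2 / (2 * (1 - t0 / 3))) = -(lam ^ 2 / (2 * w)) := by
    have h13 : 1 - t0 / 3 = v / w := by
      rw [ht0def, hw]
      field_simp
      ring
    rw [h13, ht0def]
    field_simp
    ring
  have htay : (n:ℝ) * (p * (1 - p) * (Real.exp t0 - 1 - t0)) ≤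
      v * (t0 ^ 2 / (2 * (1 - t0/3))) := by
    rw [hv]
    have hpq : 0 ≤ (n:ℝ) * (p * (1 - p)) := by
      have : 0 < 1 - p := by linarith
      positivity
    calc (n:ℝ) * (p * (1 - p) * (Real.exp t0 - 1 - t0))
        = ((n:ℝ) * (p * (1 - p))) * (Real.exp t0 - 1 - t0) := by ring
      _ ≤ ((n:ℝ) * (p * (1 - p))) * (t0 ^ 2 / (2 * (1 - t0/3))) :=
          mul_le_mul_of_nonneg_left hexp_taylor hpq
  -- upper tail
  have hup : (μ {x | lam ≤ X x}).toReal ≤ Real.exp (-(lam ^ 2 / (2 * w))) := by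
    have h1 := ProbabilityTheory.measure_ge_le_exp_mul_mgf (X := X) (μ := μ) lam ht00.le (hint t0)
    refine h1.trans ?_
    rw [hmgf t0]
    have e1 : Real.exp t0 * Real.exp (-(p * t0)) = Real.exp ((1 - p) * t0) := by
      rw [← Real.exp_add]; congr 1; ring
    have e2 : Real.exp (-(t0 * ((n:ℝ) * p))) = Real.exp (-(p * t0)) ^ n := by
      rw [← Real.exp_nat_mul]; congr 1; ring
    have hfac : Real.exp (-(t0 * ((n:ℝ) * p))) * (p * Real.exp t0 + (1 - p)) ^ n =
        ((1 - p) * Real.exp (-(p * t0)) + p * Real.exp ((1 - p) * t0)) ^ n := by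
      rw [e2, ← mul_pow]
      congr 1
      linear_combination p * e1
    rw [hfac]
    have hbern := bernoulli_mgf p t0 hp0.le hp1.le ht00.le
    have hmono1 : ((1 - p) * Real.exp (-(p * t0)) + p * Real.exp ((1 - p) * t0)) ^ n ≤
        Real.exp (p * (1 - p) * (Real.exp t0 - 1 - t0)) ^ n := by
      apply pow_le_pow_left₀ _ hbern n
      have h1p : 0 < 1 - p := by linarith
      positivity
    calc Real.exp (-t0 * lam) * ((1 - p) * Real.exp (-(p * t0)) + p * Real.exp ((1 - p) * t0)) ^ n
        ≤ Real.exp (-t0 * lam) * Real.exp (p * (1 - p) * (Real.exp t0 - 1 - t0)) ^ n :=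
          mul_le_mul_of_nonneg_left hmono1 (Real.exp_pos _).le
      _ = Real.exp (-t0 * lam + (n:ℝ) * (p * (1 - p) * (Real.exp t0 - 1 - t0))) := by
          rw [← Real.exp_nat_mul, ← Real.exp_add]
      _ ≤ Real.exp (-(lam ^ 2 / (2 * w))) := by
          apply Real.exp_le_exp.mpr
          rw [← harith]
          linarith
  -- lower tail
  have hdown : (μ {x | X x ≤ -lam}).toReal ≤ Real.exp (-(lam ^ 2 / (2 * w))) := by
    have h1 := ProbabilityTheory.measure_le_le_exp_mul_mgf (X := X) (μ := μ) (-lam)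
      (neg_nonpos.mpr ht00.le) (hint (-t0))
    refine h1.trans ?_
    rw [hmgf (-t0)]
    have e1 : Real.exp (p * t0) * Real.exp (-t0) = Real.exp (-((1 - p) * t0)) := by
      rw [← Real.exp_add]; congr 1; ring
    have e2 : Real.exp (-(-t0 * ((n:ℝ) * p))) = Real.exp (p * t0) ^ n := by
      rw [← Real.exp_nat_mul]; congr 1; ring
    have hfac : Real.exp (-(-t0 * ((n:ℝ) * p))) * (p * Real.exp (-t0) + (1 - p)) ^ n =
        (p * Real.exp (-((1 - p) * t0)) + (1 - p) * Real.exp (p * t0)) ^ n := by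
      rw [e2, ← mul_pow]
      congr 1
      linear_combination p * e1
    rw [hfac]
    have hbern := bernoulli_mgf' p t0 hp0.le hp1.le ht00.le
    have hmono1 : (p * Real.exp (-((1 - p) * t0)) + (1 - p) * Real.exp (p * t0)) ^ n ≤
        Real.exp (p * (1 - p) * (Real.exp t0 - 1 - t0)) ^ n := by
      apply pow_le_pow_left₀ _ hbern n
      have h1p : 0 < 1 - p := by linarith
      positivity
    calc Real.exp (- -t0 * -lam) * (p * Real.exp (-((1 - p) * t0)) + (1 - p) * Real.exp (p * t0)) ^ n
        ≤ Real.exp (- -t0 * -lam) * Real.exp (p * (1 - p) * (Real.exp t0 - 1 - t0)) ^ n :=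
          mul_le_mul_of_nonneg_left hmono1 (Real.exp_pos _).le
      _ = Real.exp (-t0 * lam + (n:ℝ) * (p * (1 - p) * (Real.exp t0 - 1 - t0))) := by
          rw [← Real.exp_nat_mul, ← Real.exp_add]
          congr 1
          ring
      _ ≤ Real.exp (-(lam ^ 2 / (2 * w))) := by
          apply Real.exp_le_exp.mpr
          rw [← harith]
          linarith
  -- identify the set
  have hsetid : {x ∈ Set.Ioo (0 : ℝ) 1 |
      ε * Real.sqrt n <
        |∑ j ∈ J, ((Set.Ico ((a : ℝ) / (b : ℝ) ^ h) (((a : ℝ) + 1) / (b : ℝ) ^ h)).indicator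
            (fun _ => (1 : ℝ)) (Int.fract ((b : ℝ) ^ j * x)) - ((b : ℝ) ^ h)⁻¹)|}
      = {x | lam < |X x|} ∩ Set.Ioo (0:ℝ) 1 := by
    ext x
    simp only [Set.mem_setOf_eq, Set.mem_inter_iff, Set.mem_sep_iff]
    rw [and_comm]
    have hXval : ∑ j ∈ J, ((Set.Ico ((a : ℝ) / (b : ℝ) ^ h) (((a : ℝ) + 1) / (b : ℝ) ^ h)).indicator
            (fun _ => (1 : ℝ)) (Int.fract ((b : ℝ) ^ j * x)) - ((b : ℝ) ^ h)⁻¹) = X x := by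
      simp only [hX, hS]
      rw [Finset.sum_sub_distrib, Finset.sum_const, hcard, nsmul_eq_mul]
      rfl
    rw [hXval]
  rw [hsetid, ← Measure.restrict_apply' measurableSet_Ioo, ← hμ]
  have hsub : {x | lam < |X x|} ⊆ {x | lam ≤ X x} ∪ {x | X x ≤ -lam} := by
    intro x hx
    simp only [Set.mem_setOf_eq, Set.mem_union] at *
    rcases lt_or_ge (X x) 0 with hneg | hpos
    · right
      have habs : |X x| = -X x := abs_of_neg hneg
      rw [habs] at hx
      linarith
    · left
      have habs : |X x| = X x := abs_of_nonneg hpos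
      rw [habs] at hx
      linarith
  have hboundE : -(lam ^ 2 / (2 * w)) = -ε ^ 2 /
      (2 * p * (1 - p) + 2 / 3 * ε / sn) := by
    have hden : 0 < 2 * p * (1 - p) + 2 / 3 * ε / sn := by
      have h1 : 0 < 2 * p * (1 - p) := by nlinarith
      have h2 : 0 < 2 / 3 * ε / sn := by positivity
      linarith
    have h2w : (0:ℝ) < 2 * w := by linarith
    have hkey : lam ^ 2 * (2 * p * (1 - p) + 2 / 3 * ε / sn) = ε ^ 2 * (2 * w) := by
      rw [hlamdef, hw, hv, ← hsq]
      field_simp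
      ring
    have hdiv : lam ^ 2 / (2 * w) = ε ^ 2 / (2 * p * (1 - p) + 2 / 3 * ε / sn) := by
      rw [div_eq_div_iff (ne_of_gt h2w) (ne_of_gt hden)]
      exact hkey
    rw [neg_div, hdiv]
  calc μ ({x | lam < |X x|}) ≤ μ ({x | lam ≤ X x} ∪ {x | X x ≤ -lam}) := measure_mono hsub
    _ ≤ μ {x | lam ≤ X x} + μ {x | X x ≤ -lam} := measure_union_le _ _
    _ ≤ ENNReal.ofReal (Real.exp (-(lam ^ 2 / (2 * w)))) +
        ENNReal.ofReal (Real.exp (-(lam ^ 2 / (2 * w)))) := by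
        gcongr
        · rw [← ENNReal.ofReal_toReal (measure_ne_top μ _)]
          exact ENNReal.ofReal_le_ofReal hup
        · rw [← ENNReal.ofReal_toReal (measure_ne_top μ _)]
          exact ENNReal.ofReal_le_ofReal hdown
    _ = ENNReal.ofReal (2 * Real.exp (-(lam ^ 2 / (2 * w)))) := by
        rw [← ENNReal.ofReal_add (Real.exp_pos _).le (Real.exp_pos _).le]
        congr 1
        ring
    _ = ENNReal.ofReal (2 * Real.exp (-ε ^ 2 /
        (2 * ((b : ℝ) ^ h)⁻¹ * (1 - ((b : ℝ) ^ h)⁻¹) + 2 / 3 * ε / Real.sqrt n))) := by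
        rw [hboundE]
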